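/- For all n ≥ 3, χ(J_±(n,3,-2)) ≤ 4⌈log₂⌈log₂ n⌉⌉ + 6. -/

import Mathlib

open SimpleGraph Finset

/-- Vertices of the Johnson-type graph: vectors in `{-1,0,1}^n` with exactly `k`
nonzero coordinates. -/
def JVert (n k : ℕ) : Type :=
  {v : Fin n → ℤ // (∀ i, v i = -1 ∨ v i = 0 ∨ v i = 1) ∧
    (Finset.univ.filter (fun i => v i ≠ 0)).card = k}

/-- The Johnson-type graph `J_±(n,k,t)`: edges join pairs with scalar product `t`. -/
def Jpm (n k : ℕ) (t : ℤ) : SimpleGraph (JVert n k) where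
  Adj u v := u ≠ v ∧ ∑ i, u.1 i * v.1 i = t
  symm := ⟨by
    intro u v ⟨h1, h2⟩
    refine ⟨h1.symm, ?_⟩
    rw [← h2]
    exact Finset.sum_congr rfl (fun i _ => mul_comm _ _)⟩
  loopless := ⟨by intro u ⟨h1, _⟩; exact h1 rfl⟩

/-! ### Auxiliary: most-significant differing bit -/

/-- Most significant differing bit of `x` and `y`. -/
def mb (x y : ℕ) : ℕ := Nat.log2 (x ^^^ y)

lemma mb_comm (x y : ℕ) : mb x y = mb y x := by rw [mb, mb, Nat.xor_comm]

lemma testBit_log2 {d : ℕ} (hd : d ≠ 0) : d.testBit d.log2 = true := by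
  have h1 : 2 ^ d.log2 ≤ d := Nat.log2_self_le hd
  have h2 : d < 2 ^ (d.log2 + 1) := Nat.lt_log2_self
  rw [Nat.testBit, Nat.shiftRight_eq_div_pow]
  have : d / 2 ^ d.log2 = 1 := by
    refine Nat.div_eq_of_lt_le (by simpa using h1) ?_
    simpa [pow_succ, mul_comm] using h2
  simp [this]

lemma testBit_gt_log2 {d j : ℕ} (hj : d.log2 < j) : d.testBit j = false := by
  apply Nat.testBit_eq_false_of_lt
  calc d < 2 ^ (d.log2 + 1) := Nat.lt_log2_self
    _ ≤ 2 ^ j := Nat.pow_le_pow_right (by norm_num) hj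

lemma mb_testBit_of_lt {x y : ℕ} (h : x < y) :
    x.testBit (mb x y) = false ∧ y.testBit (mb x y) = true := by
  have hne : x ^^^ y ≠ 0 := by simp [Nat.xor_eq_zero_iff]; omega
  have ht : (x ^^^ y).testBit (mb x y) = true := testBit_log2 hne
  have hagree : ∀ j, mb x y < j → x.testBit j = y.testBit j := by
    intro j hj
    have := testBit_gt_log2 (d := x ^^^ y) hj
    rw [Nat.testBit_xor] at this
    rcases hx : x.testBit j <;> rcases hy : y.testBit j <;> simp_all
  rw [Nat.testBit_xor] at ht
  rcases hx : x.testBit (mb x y) <;> rcases hy : y.testBit (mb x y) <;> simp_all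
  exact absurd (Nat.lt_of_testBit _ hy hx fun j hj => (hagree j hj).symm) (by omega)

lemma mb_chain {x y z : ℕ} (h1 : x < y) (h2 : y < z) : mb x y ≠ mb y z := by
  intro he
  have a := (mb_testBit_of_lt h1).2
  have b := (mb_testBit_of_lt h2).1
  rw [he] at a
  rw [a] at b
  simp at b

lemma mb_lt {x y B : ℕ} (hx : x < 2^B) (hy : y < 2^B) (hB : 0 < B) : mb x y < B := by
  by_cases h : x ^^^ y = 0
  · simp [mb, h, Nat.log2]; omega
  · exact (Nat.log2_lt h).2 (Nat.xor_lt_two_pow hx hy)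

/-- The number of colors used in the interesting part. -/
def LL (n : ℕ) : ℕ := Nat.clog 2 (Nat.clog 2 n)

lemma mm_lt {n a b c : ℕ} (hn : 3 ≤ n) (ha : a < n) (hb : b < n) (hc : c < n) :
    mb (mb a b) (mb b c) < LL n := by
  have hB2 : 2 ≤ Nat.clog 2 n := by
    have : (2:ℕ)^1 < 3 := by norm_num
    have h13 : 1 < Nat.clog 2 3 := (Nat.lt_clog_iff_pow_lt (by norm_num)).2 this
    have := Nat.clog_mono_right 2 hn
    omega
  have hpow : n ≤ 2 ^ Nat.clog 2 n := Nat.le_pow_clog (by norm_num) n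
  have h1 : mb a b < Nat.clog 2 n := mb_lt (by omega) (by omega) (by omega)
  have h2 : mb b c < Nat.clog 2 n := mb_lt (by omega) (by omega) (by omega)
  have hpow2 : Nat.clog 2 n ≤ 2 ^ LL n := Nat.le_pow_clog (by norm_num) _
  exact mb_lt (by omega) (by omega) (Nat.clog_pos (by norm_num) hB2)

/-! ### Sorted support of a vertex -/

noncomputable def FF {n : ℕ} (u : JVert n 3) : Fin 3 → Fin n :=
  fun k => ((Finset.univ.filter (fun i => u.1 i ≠ 0)).orderIsoOfFin u.2.2 k : Fin n)

lemma FF_strictMono {n : ℕ} (u : JVert n 3) : StrictMono (FF u) := by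
  intro a b hab
  exact ((Finset.univ.filter (fun i => u.1 i ≠ 0)).orderIsoOfFin u.2.2).strictMono hab

lemma FF_ne_zero {n : ℕ} (u : JVert n 3) (k : Fin 3) : u.1 (FF u k) ≠ 0 := by
  have := ((Finset.univ.filter (fun i => u.1 i ≠ 0)).orderIsoOfFin u.2.2 k).2
  simp only [Finset.mem_filter] at this
  exact this.2

lemma FF_surj {n : ℕ} (u : JVert n 3) {i : Fin n} (hi : u.1 i ≠ 0) : ∃ k, FF u k = i := by
  obtain ⟨k, hk⟩ := ((Finset.univ.filter (fun i => u.1 i ≠ 0)).orderIsoOfFin u.2.2).surjective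
    ⟨i, by simp [hi]⟩
  exact ⟨k, by rw [FF, hk]⟩

lemma sign_cases {n : ℕ} (u : JVert n 3) (k : Fin 3) :
    u.1 (FF u k) = -1 ∨ u.1 (FF u k) = 1 := by
  rcases u.2.1 (FF u k) with h | h | h
  · exact Or.inl h
  · exact absurd h (FF_ne_zero u k)
  · exact Or.inr h

/-! ### The coloring -/

def enc6 : Bool → Bool → Bool → Fin 6
  | true, true, true => 0
  | true, true, false => 1
  | true, false, false => 2
  | false, true, true => 3
  | false, false, true => 4
  | false, false, false => 5
  | true, false, true => 0
  | false, true, false => 0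

lemma enc6_inj : ∀ a0 a1 a2 b0 b1 b2 : Bool,
    ¬(a0 ≠ a1 ∧ a1 ≠ a2) → ¬(b0 ≠ b1 ∧ b1 ≠ b2) →
    enc6 a0 a1 a2 = enc6 b0 b1 b2 → a0 = b0 ∧ a1 = b1 ∧ a2 = b2 := by decide

noncomputable def colOf (n : ℕ) (hn : 3 ≤ n) (u : JVert n 3) :
    (Bool × Bool × Fin (LL n)) ⊕ Fin 6 :=
  if _ : u.1 (FF u 0) ≠ u.1 (FF u 1) ∧ u.1 (FF u 1) ≠ u.1 (FF u 2) then
    Sum.inl (decide (u.1 (FF u 0) = 1),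
      decide (mb (FF u 0 : ℕ) (FF u 1 : ℕ) < mb (FF u 1 : ℕ) (FF u 2 : ℕ)),
      ⟨mb (mb (FF u 0 : ℕ) (FF u 1 : ℕ)) (mb (FF u 1 : ℕ) (FF u 2 : ℕ)),
        mm_lt hn (FF u 0).2 (FF u 1).2 (FF u 2).2⟩)
  else Sum.inr (enc6 (decide (u.1 (FF u 0) = 1)) (decide (u.1 (FF u 1) = 1))
    (decide (u.1 (FF u 2) = 1)))

/-! ### Structure of adjacency -/

lemma adj_structure {n : ℕ} (u v : JVert n 3) (h : ∑ i, u.1 i * v.1 i = -2) :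
    ∃ i j : Fin n, i ≠ j ∧ u.1 i * v.1 i = -1 ∧ u.1 j * v.1 j = -1 := by
  classical
  set N : Finset (Fin n) := Finset.univ.filter (fun i => u.1 i * v.1 i = -1) with hN
  have hsumN : ∑ i ∈ N, u.1 i * v.1 i = -(N.card : ℤ) := by
    rw [Finset.sum_congr rfl (fun i hi => by
      simp only [hN, Finset.mem_filter] at hi; exact hi.2)]
    simp
  have hrest : 0 ≤ ∑ i ∈ Finset.univ.filter (fun i => ¬(u.1 i * v.1 i = -1)), u.1 i * v.1 i := by
    apply Finset.sum_nonneg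
    intro i hi
    simp only [Finset.mem_filter] at hi
    rcases u.2.1 i with h1 | h1 | h1 <;> rcases v.2.1 i with h2 | h2 | h2 <;>
      rw [h1, h2] <;> simp_all
  have hsplit := Finset.sum_filter_add_sum_filter_not Finset.univ
    (fun i => u.1 i * v.1 i = -1) (fun i => u.1 i * v.1 i)
  rw [h] at hsplit
  rw [← hN] at hsplit
  rw [hsumN] at hsplit
  have h2 : 2 ≤ N.card := by
    have : (2:ℤ) ≤ (N.card : ℤ) := by linarith
    exact_mod_cast this
  obtain ⟨i, hi, j, hj, hij⟩ := Finset.one_lt_card.1 h2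
  simp only [hN, Finset.mem_filter] at hi hj
  exact ⟨i, j, hij, hi.2, hj.2⟩

lemma prod_neg_one {a b : ℤ} (ha : a = -1 ∨ a = 0 ∨ a = 1) (hb : b = -1 ∨ b = 0 ∨ b = 1)
    (h : a * b = -1) : a ≠ 0 ∧ b ≠ 0 ∧ a = -b := by
  rcases ha with rfl | rfl | rfl <;> rcases hb with rfl | rfl | rfl <;> simp_all

lemma fin3 (k : Fin 3) : k = 0 ∨ k = 1 ∨ k = 2 := by
  fin_cases k <;> simp

/-! ### Key lemma for the special patterns -/

lemma key (A B : Fin 3 → ℕ) (hA0 : A 0 < A 1) (hA1 : A 1 < A 2)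
    (hB0 : B 0 < B 1) (hB1 : B 1 < B 2)
    (l k : Fin 3) (hl : l ≠ 1) (hk : k ≠ 1)
    (h1 : A 1 = B l) (h2 : B 1 = A k)
    (hs : (mb (A 0) (A 1) < mb (A 1) (A 2)) ↔ (mb (B 0) (B 1) < mb (B 1) (B 2)))
    (hm : mb (mb (A 0) (A 1)) (mb (A 1) (A 2)) = mb (mb (B 0) (B 1)) (mb (B 1) (B 2))) :
    False := by
  have hl' : l = 0 ∨ l = 2 := by rcases fin3 l with h | h | h <;> simp_all
  have hk' : k = 0 ∨ k = 2 := by rcases fin3 k with h | h | h <;> simp_all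
  rcases hl' with rfl | rfl <;> rcases hk' with rfl | rfl
  · omega
  · rw [← h1, h2] at hs hm
    set p := mb (A 0) (A 1) with hp
    set q := mb (A 1) (A 2) with hq
    set q' := mb (A 2) (B 2) with hq'
    have hpq : p ≠ q := mb_chain hA0 hA1
    have hqq' : q ≠ q' := mb_chain hA1 (h2 ▸ hB1)
    rcases lt_or_gt_of_ne hpq with hlt | hlt
    · exact mb_chain hlt (hs.1 hlt) hm
    · have h2' : q' < q := by
        rcases lt_or_gt_of_ne hqq' with h' | h'
        · exact absurd (hs.2 h') (by omega)
        · exact h'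
      exact mb_chain h2' hlt (by rw [mb_comm q' q, mb_comm q p, ← hm])
  · rw [← h1, h2] at hs hm
    set p' := mb (B 0) (A 0) with hp'
    set p := mb (A 0) (A 1) with hp
    set q := mb (A 1) (A 2) with hq
    have hpq : p ≠ q := mb_chain hA0 hA1
    have hp'p : p' ≠ p := mb_chain (h2 ▸ hB0) hA0
    rcases lt_or_gt_of_ne hpq with hlt | hlt
    · exact mb_chain (hs.1 hlt) hlt hm.symm
    · have h2' : p < p' := by
        rcases lt_or_gt_of_ne hp'p with h' | h'
        · exact absurd (hs.2 h') (by omega)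
        · exact h'
      exact mb_chain hlt h2' (by rw [mb_comm q p, hm, mb_comm p' p])
  · omega

/-! ### Key lemma for the six other patterns -/

set_option maxHeartbeats 1000000 in
lemma six_case (s t : Fin 3 → ℤ) (hsv : ∀ k, s k = -1 ∨ s k = 1)
    (heq : ∀ k, s k = t k)
    (hns : ¬(s 0 ≠ s 1 ∧ s 1 ≠ s 2))
    (ki li kj lj : Fin 3) (hk : ki ≠ kj) (hl : li ≠ lj)
    (h1 : s ki = -t li) (h2 : s kj = -t lj)
    (A B : Fin 3 → ℕ) (hA0 : A 0 < A 1) (hA1 : A 1 < A 2)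
    (hB0 : B 0 < B 1) (hB1 : B 1 < B 2)
    (e1 : A ki = B li) (e2 : A kj = B lj) : False := by
  have q0 := heq 0; have q1 := heq 1; have q2 := heq 2
  rw [not_and_or, not_ne_iff, not_ne_iff] at hns
  rcases hsv 0 with h | h <;> rcases hsv 1 with h' | h' <;> rcases hsv 2 with h'' | h'' <;>
    rcases hns with hc | hc <;>
    rcases fin3 ki with rfl | rfl | rfl <;> rcases fin3 li with rfl | rfl | rfl <;>
    rcases fin3 kj with rfl | rfl | rfl <;> rcases fin3 lj with rfl | rfl | rfl <;>
    first
      | exact hk rfl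
      | exact hl rfl
      | omega

/-! ### Small helpers on signs -/

lemma val_eq_of_decide {a b : ℤ} (ha : a = -1 ∨ a = 1) (hb : b = -1 ∨ b = 1)
    (h : decide (a = 1) = decide (b = 1)) : a = b := by
  have := decide_eq_decide.mp h
  rcases ha with rfl | rfl <;> rcases hb with rfl | rfl <;> simp_all

lemma neg_of_ne {a b : ℤ} (ha : a = -1 ∨ a = 1) (hb : b = -1 ∨ b = 1)
    (h : a ≠ b) : b = -a := by
  rcases ha with rfl | rfl <;> rcases hb with rfl | rfl <;> simp_all

lemma decide_ne_iff {a b : ℤ} (ha : a = -1 ∨ a = 1) (hb : b = -1 ∨ b = 1) :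
    (decide (a = 1) ≠ decide (b = 1)) ↔ a ≠ b := by
  rcases ha with rfl | rfl <;> rcases hb with rfl | rfl <;> norm_num

/-! ### Properness of the coloring -/

set_option maxHeartbeats 1000000 in
lemma proper {n : ℕ} (hn : 3 ≤ n) (u v : JVert n 3) (hne : u ≠ v)
    (hsum : ∑ i, u.1 i * v.1 i = -2) : colOf n hn u ≠ colOf n hn v := by
  intro hcol
  obtain ⟨i, j, hij, hi, hj⟩ := adj_structure u v hsum
  obtain ⟨hui, hvi, huvi⟩ := prod_neg_one (u.2.1 i) (v.2.1 i) hi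
  obtain ⟨huj, hvj, huvj⟩ := prod_neg_one (u.2.1 j) (v.2.1 j) hj
  obtain ⟨ki, hki⟩ := FF_surj u hui
  obtain ⟨li, hli⟩ := FF_surj v hvi
  obtain ⟨kj, hkj⟩ := FF_surj u huj
  obtain ⟨lj, hlj⟩ := FF_surj v hvj
  have hkk : ki ≠ kj := by rintro rfl; exact hij (by rw [← hki, ← hkj])
  have hll : li ≠ lj := by rintro rfl; exact hij (by rw [← hli, ← hlj])
  have hs1 : u.1 (FF u ki) = -(v.1 (FF v li)) := by rw [hki, hli]; exact huvi
  have hs2 : u.1 (FF u kj) = -(v.1 (FF v lj)) := by rw [hkj, hlj]; exact huvj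
  have hAu0 : (FF u 0 : ℕ) < (FF u 1 : ℕ) := FF_strictMono u (by decide)
  have hAu1 : (FF u 1 : ℕ) < (FF u 2 : ℕ) := FF_strictMono u (by decide)
  have hAv0 : (FF v 0 : ℕ) < (FF v 1 : ℕ) := FF_strictMono v (by decide)
  have hAv1 : (FF v 1 : ℕ) < (FF v 2 : ℕ) := FF_strictMono v (by decide)
  by_cases hu : u.1 (FF u 0) ≠ u.1 (FF u 1) ∧ u.1 (FF u 1) ≠ u.1 (FF u 2) <;>
    by_cases hv : v.1 (FF v 0) ≠ v.1 (FF v 1) ∧ v.1 (FF v 1) ≠ v.1 (FF v 2)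
  · -- both special
    simp only [colOf, dif_pos hu, dif_pos hv, Sum.inl.injEq, Prod.mk.injEq,
      Fin.mk.injEq] at hcol
    obtain ⟨hd0, hd1, hd2⟩ := hcol
    have h00 : u.1 (FF u 0) = v.1 (FF v 0) :=
      val_eq_of_decide (sign_cases u 0) (sign_cases v 0) hd0
    have hu1 : u.1 (FF u 1) = -u.1 (FF u 0) :=
      neg_of_ne (sign_cases u 0) (sign_cases u 1) hu.1
    have hu2 : u.1 (FF u 2) = -u.1 (FF u 1) :=
      neg_of_ne (sign_cases u 1) (sign_cases u 2) hu.2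
    have hv1 : v.1 (FF v 1) = -v.1 (FF v 0) :=
      neg_of_ne (sign_cases v 0) (sign_cases v 1) hv.1
    have hv2 : v.1 (FF v 2) = -v.1 (FF v 1) :=
      neg_of_ne (sign_cases v 1) (sign_cases v 2) hv.2
    have h11 : u.1 (FF u 1) = v.1 (FF v 1) := by rw [hu1, hv1, h00]
    have h22 : u.1 (FF u 2) = v.1 (FF v 2) := by rw [hu2, hv2, h11]
    have hb1 : (ki = 1 ∧ li ≠ 1) ∨ (li = 1 ∧ ki ≠ 1) := by
      rcases sign_cases u 0 with h | h <;>
        rcases fin3 ki with rfl | rfl | rfl <;> rcases fin3 li with rfl | rfl | rfl <;>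
        first
          | (left; exact ⟨rfl, by decide⟩)
          | (right; exact ⟨rfl, by decide⟩)
          | omega
    have hb2 : (kj = 1 ∧ lj ≠ 1) ∨ (lj = 1 ∧ kj ≠ 1) := by
      rcases sign_cases u 0 with h | h <;>
        rcases fin3 kj with rfl | rfl | rfl <;> rcases fin3 lj with rfl | rfl | rfl <;>
        first
          | (left; exact ⟨rfl, by decide⟩)
          | (right; exact ⟨rfl, by decide⟩)
          | omega
    have hsd := decide_eq_decide.mp hd1
    rcases hb1 with ⟨hk1, hl1⟩ | ⟨hl1, hk1⟩ <;> rcases hb2 with ⟨hk2, hl2⟩ | ⟨hl2, hk2⟩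
    · exact hkk (hk1.trans hk2.symm)
    · exact key (fun m => (FF u m : ℕ)) (fun m => (FF v m : ℕ)) hAu0 hAu1 hAv0 hAv1
        li kj hl1 hk2
        (congrArg Fin.val (by rw [← hk1, hki, hli]))
        (congrArg Fin.val (by rw [← hl2, hlj, hkj]))
        hsd hd2
    · exact key (fun m => (FF u m : ℕ)) (fun m => (FF v m : ℕ)) hAu0 hAu1 hAv0 hAv1
        lj ki hl2 hk1
        (congrArg Fin.val (by rw [← hk2, hkj, hlj]))
        (congrArg Fin.val (by rw [← hl1, hli, hki]))
        hsd hd2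
    · exact hll (hl1.trans hl2.symm)
  · simp only [colOf, dif_pos hu, dif_neg hv] at hcol
    exact Sum.inl_ne_inr hcol
  · simp only [colOf, dif_neg hu, dif_pos hv] at hcol
    exact Sum.inr_ne_inl hcol
  · -- both among the six other patterns
    simp only [colOf, dif_neg hu, dif_neg hv, Sum.inr.injEq] at hcol
    have hu' : ¬(decide (u.1 (FF u 0) = 1) ≠ decide (u.1 (FF u 1) = 1) ∧
        decide (u.1 (FF u 1) = 1) ≠ decide (u.1 (FF u 2) = 1)) := by
      rw [decide_ne_iff (sign_cases u 0) (sign_cases u 1),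
        decide_ne_iff (sign_cases u 1) (sign_cases u 2)]
      exact hu
    have hv' : ¬(decide (v.1 (FF v 0) = 1) ≠ decide (v.1 (FF v 1) = 1) ∧
        decide (v.1 (FF v 1) = 1) ≠ decide (v.1 (FF v 2) = 1)) := by
      rw [decide_ne_iff (sign_cases v 0) (sign_cases v 1),
        decide_ne_iff (sign_cases v 1) (sign_cases v 2)]
      exact hv
    obtain ⟨e0, e1', e2'⟩ := enc6_inj _ _ _ _ _ _ hu' hv' hcol
    have h00 : u.1 (FF u 0) = v.1 (FF v 0) :=
      val_eq_of_decide (sign_cases u 0) (sign_cases v 0) e0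
    have h11 : u.1 (FF u 1) = v.1 (FF v 1) :=
      val_eq_of_decide (sign_cases u 1) (sign_cases v 1) e1'
    have h22 : u.1 (FF u 2) = v.1 (FF v 2) :=
      val_eq_of_decide (sign_cases u 2) (sign_cases v 2) e2'
    exact six_case (fun m => u.1 (FF u m)) (fun m => v.1 (FF v m))
      (fun k => sign_cases u k)
      (fun k => by rcases fin3 k with rfl | rfl | rfl; exacts [h00, h11, h22])
      hu ki li kj lj hkk hll hs1 hs2
      (fun m => (FF u m : ℕ)) (fun m => (FF v m : ℕ)) hAu0 hAu1 hAv0 hAv1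
      (congrArg Fin.val (hki.trans hli.symm))
      (congrArg Fin.val (hkj.trans hlj.symm))

/-- `χ(J_±(n,3,-2)) ≤ 4⌈log₂⌈log₂ n⌉⌉ + 6` for `n ≥ 3`. -/
theorem Jpm_three_neg_two_upper (n : ℕ) (hn : 3 ≤ n) :
    (Jpm n 3 (-2)).Colorable (4 * Nat.clog 2 (Nat.clog 2 n) + 6) := by
  have hcol : (Jpm n 3 (-2)).Coloring ((Bool × Bool × Fin (LL n)) ⊕ Fin 6) :=
    SimpleGraph.Coloring.mk (colOf n hn) (fun {a b} hab => proper hn a b hab.1 hab.2)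
  have hc := hcol.colorable
  have hcard : Fintype.card ((Bool × Bool × Fin (LL n)) ⊕ Fin 6) =
      4 * Nat.clog 2 (Nat.clog 2 n) + 6 := by
    rw [Fintype.card_sum, Fintype.card_prod, Fintype.card_prod, Fintype.card_bool, Fintype.card_fin, Fintype.card_fin]
    simp [LL]; ring
  rwa [hcard] at hc
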